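/- Theorem 5 (ρ_{S3} for 1-D mapping): let N ≥ 3 and let σ, π be independent uniformly random permutations of Fin N (product measure); set X_w = u (σ w), Y_w = u (π w) and symbol energy E_w = X_w² + Y_w². Then for any three pairwise distinct positions w, w', w'', E[E_w · E_{w'} · E_{w''}] = 2ρ₃ + 6·ρ₁·m₂, where ρ₁ = (N·m₂² − m₄)/(N − 1) and ρ₃ = (N²·m₂³ − 3N·m₂·m₄ + 2·m₆)/((N − 1)(N − 2)). -/

import Mathlib

/-- Expectation of a real-valued random variable on the finite probability space
`Equiv.Perm (Fin N) × Equiv.Perm (Fin N)` of pairs of independent uniformly random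
permutations (product of uniform measures = uniform measure on the product). -/
noncomputable def permExpect2 (N : ℕ)
    (f : Equiv.Perm (Fin N) × Equiv.Perm (Fin N) → ℝ) : ℝ :=
  (∑ p : Equiv.Perm (Fin N) × Equiv.Perm (Fin N), f p)
    / (Fintype.card (Equiv.Perm (Fin N) × Equiv.Perm (Fin N)) : ℝ)

/-- Empirical `k`-th moment of the amplitude block `u`. -/
noncomputable def empMoment (N : ℕ) (u : Fin N → ℝ) (k : ℕ) : ℝ :=
  (1 / (N : ℝ)) * ∑ i : Fin N, (u i) ^ k

open Finset

section Aux
variable {N : ℕ}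

private lemma sum_ne_aux {N : ℕ} (i : Fin N) (X : Fin N → ℝ) :
    ∑ j, (if i = j then 0 else X j) = (∑ j, X j) - X i := by
  have h : ∀ j, (if i = j then (0:ℝ) else X j)
      = X j - (if i = j then X j else 0) := by
    intro j; split_ifs <;> ring
  rw [Finset.sum_congr rfl fun j _ => h j, Finset.sum_sub_distrib,
    Finset.sum_ite_eq Finset.univ i X, if_pos (Finset.mem_univ i)]

private lemma triple_sum {N : ℕ} (f g h : Fin N → ℝ) :
    ∑ t ∈ Finset.univ.filter
        (fun t : Fin N × Fin N × Fin N => t.1 ≠ t.2.1 ∧ t.1 ≠ t.2.2 ∧ t.2.1 ≠ t.2.2),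
      f t.1 * g t.2.1 * h t.2.2
      = (∑ i, f i) * (∑ i, g i) * (∑ i, h i)
        - (∑ i, f i * g i) * (∑ i, h i)
        - (∑ i, f i * h i) * (∑ i, g i)
        - (∑ i, g i * h i) * (∑ i, f i)
        + 2 * ∑ i, f i * g i * h i := by
  rw [Finset.sum_filter, Fintype.sum_prod_type]
  simp_rw [Fintype.sum_prod_type]
  have hcond : ∀ i j k : Fin N,
      (if i ≠ j ∧ i ≠ k ∧ j ≠ k then f i * g j * h k else 0)
      = (if i = j then 0 else if i = k then 0 else if j = k then 0
          else f i * g j * h k) := by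
    intro i j k; split_ifs <;> tauto
  simp_rw [hcond]
  have key : ∀ i j : Fin N, (if i = j then (0:ℝ) else
      ∑ k, (if i = k then 0 else if j = k then 0 else f i * g j * h k))
      = (if i = j then 0 else f i * g j * ((∑ k, h k) - h i - h j)) := by
    intro i j
    split_ifs with hij
    · rfl
    · rw [sum_ne_aux i (fun k => if j = k then 0 else f i * g j * h k)]
      rw [sum_ne_aux j (fun k => f i * g j * h k)]
      rw [if_neg (fun hh => hij hh.symm), ← Finset.mul_sum]
      ring
  have step1 : ∀ i j : Fin N,
      ∑ k, (if i = j then (0:ℝ) else if i = k then 0 else if j = k then 0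
          else f i * g j * h k)
      = (if i = j then 0 else f i * g j * ((∑ k, h k) - h i - h j)) := by
    intro i j
    rw [← key i j]
    split_ifs with hij
    · simp
    · rfl
  simp_rw [step1]
  have step2 : ∀ i : Fin N,
      ∑ j, (if i = j then (0:ℝ) else f i * g j * ((∑ k, h k) - h i - h j))
      = (∑ j, f i * g j * ((∑ k, h k) - h i - h j))
        - f i * g i * ((∑ k, h k) - h i - h i) :=
    fun i => sum_ne_aux i _
  simp_rw [step2]
  have step3 : ∀ i : Fin N,
      ∑ j, f i * g j * ((∑ k, h k) - h i - h j)
      = f i * ((∑ k, h k) - h i) * (∑ j, g j) - f i * (∑ j, g j * h j) := by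
    intro i
    have e : ∀ j, f i * g j * ((∑ k, h k) - h i - h j)
        = (f i * ((∑ k, h k) - h i)) * g j - f i * (g j * h j) := by intro j; ring
    rw [Finset.sum_congr rfl fun j _ => e j, Finset.sum_sub_distrib,
      ← Finset.mul_sum, ← Finset.mul_sum]
  simp_rw [step3, Finset.sum_sub_distrib]
  have A : ∑ x, f x * ((∑ k, h k) - h x) * (∑ j, g j)
      = ((∑ i, f i) * (∑ k, h k) - (∑ i, f i * h i)) * (∑ j, g j) := by
    rw [← Finset.sum_mul]
    congr 1
    have e : ∀ x, f x * ((∑ k, h k) - h x)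
        = f x * (∑ k, h k) - f x * h x := by intro x; ring
    rw [Finset.sum_congr rfl fun x _ => e x, Finset.sum_sub_distrib, ← Finset.sum_mul]
  have B : ∑ x, f x * (∑ j, g j * h j) = (∑ i, f i) * (∑ j, g j * h j) := by
    rw [← Finset.sum_mul]
  have D : ∑ x, f x * g x * ((∑ k, h k) - h x - h x)
      = (∑ i, f i * g i) * (∑ k, h k) - 2 * (∑ i, f i * g i * h i) := by
    have e : ∀ x, f x * g x * ((∑ k, h k) - h x - h x)
        = (f x * g x) * (∑ k, h k) - 2 * (f x * g x * h x) := by intro x; ring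
    rw [Finset.sum_congr rfl fun x _ => e x, Finset.sum_sub_distrib, ← Finset.sum_mul,
      ← Finset.mul_sum]
  rw [A, B, D]
  ring

private lemma perm_fiber_card (w w' w'' : Fin N) (h1 : w ≠ w') (h2 : w ≠ w'') (h3 : w' ≠ w'')
    {t : Fin N × Fin N × Fin N}
    (ht : t.1 ≠ t.2.1 ∧ t.1 ≠ t.2.2 ∧ t.2.1 ≠ t.2.2) :
    (Finset.univ.filter (fun σ : Equiv.Perm (Fin N) => (σ w, σ w', σ w'') = t)).card
      = (Finset.univ.filter
          (fun σ : Equiv.Perm (Fin N) => (σ w, σ w', σ w'') = (w, w', w''))).card := by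
  obtain ⟨i, j, k⟩ := t
  obtain ⟨hij, hik, hjk⟩ := ht
  simp only at hij hik hjk
  set τ1 := Equiv.swap w i with hτ1
  set τ2 := Equiv.swap (τ1 w') j with hτ2
  set τ3 := Equiv.swap (τ2 (τ1 w'')) k with hτ3
  set τ := τ3 * τ2 * τ1 with hτ
  have e1 : τ1 w = i := Equiv.swap_apply_left w i
  have hne1 : τ1 w' ≠ i := by
    rw [← e1]; exact fun hh => h1 (τ1.injective hh).symm
  have hne1'' : τ1 w'' ≠ i := by
    rw [← e1]; exact fun hh => h2 (τ1.injective hh).symm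
  have e2 : τ2 i = i := Equiv.swap_apply_of_ne_of_ne (Ne.symm hne1) hij
  have e2' : τ2 (τ1 w') = j := Equiv.swap_apply_left _ _
  have hne2 : τ2 (τ1 w'') ≠ i := by
    rw [← e2]; exact fun hh => hne1'' (τ2.injective hh)
  have hne2' : τ2 (τ1 w'') ≠ j := by
    rw [← e2']; exact fun hh => h3 (τ1.injective (τ2.injective hh)).symm
  have e3i : τ3 i = i := Equiv.swap_apply_of_ne_of_ne (Ne.symm hne2) hik
  have e3j : τ3 j = j := Equiv.swap_apply_of_ne_of_ne (Ne.symm hne2') hjk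
  have hw : τ w = i := by
    simp only [hτ, Equiv.Perm.mul_apply, e1, e2, e3i]
  have hw' : τ w' = j := by
    simp only [hτ, Equiv.Perm.mul_apply, e2', e3j]
  have hw'' : τ w'' = k := by
    simp only [hτ, Equiv.Perm.mul_apply, hτ3, Equiv.swap_apply_left]
  apply Finset.card_nbij' (fun σ => τ⁻¹ * σ) (fun σ => τ * σ)
  · intro σ hσ
    simp only [Finset.mem_coe, mem_filter, mem_univ, true_and, Prod.mk.injEq] at hσ ⊢
    obtain ⟨a, b, c⟩ := hσ
    refine ⟨?_, ?_, ?_⟩ <;>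
      simp only [Equiv.Perm.mul_apply, a, b, c] <;>
      [rw [← hw]; rw [← hw']; rw [← hw'']] <;> simp
  · intro σ hσ
    simp only [Finset.mem_coe, mem_filter, mem_univ, true_and, Prod.mk.injEq] at hσ ⊢
    obtain ⟨a, b, c⟩ := hσ
    refine ⟨?_, ?_, ?_⟩ <;> simp [Equiv.Perm.mul_apply, a, b, c, hw, hw', hw'']
  · intro σ _; simp [mul_assoc]
  · intro σ _; simp [← mul_assoc]

private lemma perm_sum (w w' w'' : Fin N) (h1 : w ≠ w') (h2 : w ≠ w'') (h3 : w' ≠ w'')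
    (f g h : Fin N → ℝ) :
    ∑ σ : Equiv.Perm (Fin N), f (σ w) * g (σ w') * h (σ w'')
      = ((Finset.univ.filter
          (fun σ : Equiv.Perm (Fin N) => (σ w, σ w', σ w'') = (w, w', w''))).card : ℝ)
        * ((∑ i, f i) * (∑ i, g i) * (∑ i, h i)
            - (∑ i, f i * g i) * (∑ i, h i)
            - (∑ i, f i * h i) * (∑ i, g i)
            - (∑ i, g i * h i) * (∑ i, f i)
            + 2 * ∑ i, f i * g i * h i) := by
  set T : Finset (Fin N × Fin N × Fin N) := Finset.univ.filter
      (fun t => t.1 ≠ t.2.1 ∧ t.1 ≠ t.2.2 ∧ t.2.1 ≠ t.2.2) with hT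
  set c : ℕ := (Finset.univ.filter
      (fun σ : Equiv.Perm (Fin N) => (σ w, σ w', σ w'') = (w, w', w''))).card with hc
  have hmaps : ∀ σ : Equiv.Perm (Fin N), σ ∈ Finset.univ →
      (σ w, σ w', σ w'') ∈ T := by
    intro σ _
    simp only [hT, mem_filter, mem_univ, true_and]
    exact ⟨fun hh => h1 (σ.injective hh), fun hh => h2 (σ.injective hh),
      fun hh => h3 (σ.injective hh)⟩
  have key := Finset.sum_fiberwise_of_maps_to' hmaps
    (fun t : Fin N × Fin N × Fin N => f t.1 * g t.2.1 * h t.2.2)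
  have hfib : ∀ t ∈ T,
      (Finset.univ.filter (fun σ : Equiv.Perm (Fin N) => (σ w, σ w', σ w'') = t)).card = c := by
    intro t ht
    simp only [hT, mem_filter, mem_univ, true_and] at ht
    exact perm_fiber_card w w' w'' h1 h2 h3 ht
  calc ∑ σ : Equiv.Perm (Fin N), f (σ w) * g (σ w') * h (σ w'')
      = ∑ t ∈ T, ∑ σ ∈ Finset.univ.filter
          (fun σ : Equiv.Perm (Fin N) => (σ w, σ w', σ w'') = t),
          (f t.1 * g t.2.1 * h t.2.2) := key.symm
    _ = ∑ t ∈ T, (c : ℝ) * (f t.1 * g t.2.1 * h t.2.2) := by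
        apply Finset.sum_congr rfl
        intro t ht
        rw [Finset.sum_const, hfib t ht, nsmul_eq_mul]
    _ = (c : ℝ) * ∑ t ∈ T, f t.1 * g t.2.1 * h t.2.2 := by rw [← Finset.mul_sum]
    _ = _ := by rw [hT, triple_sum]


set_option maxHeartbeats 1000000 in
private lemma main_aux (hN : 3 ≤ N) (a : Fin N → ℝ)
    (w w' w'' : Fin N) (h1 : w ≠ w') (h2 : w ≠ w'') (h3 : w' ≠ w'') :
    permExpect2 N (fun p =>
        (a (p.1 w) + a (p.2 w)) * (a (p.1 w') + a (p.2 w')) * (a (p.1 w'') + a (p.2 w'')))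
      = (2 * ((∑ i, a i) ^ 3 - 3 * (∑ i, a i) * (∑ i, a i * a i) + 2 * (∑ i, a i * a i * a i))
            * ((N : ℝ) * ((N : ℝ) - 1) * ((N : ℝ) - 2))
          + 6 * (((N : ℝ) - 2) * ((∑ i, a i) * (∑ i, a i) - (∑ i, a i * a i)))
            * (((N : ℝ) - 1) * ((N : ℝ) - 2) * (∑ i, a i)))
        / (((N : ℝ) * ((N : ℝ) - 1) * ((N : ℝ) - 2))
            * ((N : ℝ) * ((N : ℝ) - 1) * ((N : ℝ) - 2))) := by
  have hn3 : (3 : ℝ) ≤ (N : ℝ) := by exact_mod_cast hN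
  set n : ℝ := (N : ℝ) with hnn
  set c : ℕ := (Finset.univ.filter
      (fun σ : Equiv.Perm (Fin N) => (σ w, σ w', σ w'') = (w, w', w''))).card with hc
  have hone : ∑ _i : Fin N, (1:ℝ) = n := by simp [hnn]
  -- the eight single-permutation sums
  have Haaa := perm_sum w w' w'' h1 h2 h3 a a a
  have Haao := perm_sum w w' w'' h1 h2 h3 a a (fun _ => (1:ℝ))
  have Haoa := perm_sum w w' w'' h1 h2 h3 a (fun _ => (1:ℝ)) a
  have Hoaa := perm_sum w w' w'' h1 h2 h3 (fun _ => (1:ℝ)) a a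
  have Haoo := perm_sum w w' w'' h1 h2 h3 a (fun _ => (1:ℝ)) (fun _ => (1:ℝ))
  have Hoao := perm_sum w w' w'' h1 h2 h3 (fun _ => (1:ℝ)) a (fun _ => (1:ℝ))
  have Hooa := perm_sum w w' w'' h1 h2 h3 (fun _ => (1:ℝ)) (fun _ => (1:ℝ)) a
  have Hooo := perm_sum w w' w'' h1 h2 h3 (fun _ => (1:ℝ)) (fun _ => (1:ℝ)) (fun _ => (1:ℝ))
  simp only [mul_one, one_mul, hone, ← hc] at Haaa Haao Haoa Hoaa Haoo Hoao Hooa Hooo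
  -- cardinality of the permutation group
  have hQ : ((Fintype.card (Equiv.Perm (Fin N)) : ℝ))
      = (c : ℝ) * (n * n * n - n * n - n * n - n * n + 2 * n) := by
    rw [← Hooo]
    simp
  have hc0 : (c : ℝ) ≠ 0 := by
    have : (1 : Equiv.Perm (Fin N)) ∈ Finset.univ.filter
        (fun σ : Equiv.Perm (Fin N) => (σ w, σ w', σ w'') = (w, w', w'')) := by simp
    have hpos : 0 < c := Finset.card_pos.mpr ⟨_, this⟩
    exact_mod_cast hpos.ne'
  have hV1 : n * n * n - n * n - n * n - n * n + 2 * n = n * (n-1) * (n-2) := by ring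
  have hn0 : n ≠ 0 := by linarith
  have hn1 : n - 1 ≠ 0 := by intro h; nlinarith
  have hn2 : n - 2 ≠ 0 := by intro h; nlinarith
  rw [permExpect2]
  rw [Fintype.card_prod, Nat.cast_mul, hQ, Fintype.sum_prod_type]
  have expand : ∀ σ π : Equiv.Perm (Fin N),
      (a (σ w) + a (π w)) * (a (σ w') + a (π w')) * (a (σ w'') + a (π w''))
      = (a (σ w) * a (σ w') * a (σ w'')) * (1:ℝ)
        + (a (σ w) * a (σ w')) * (a (π w''))
        + (a (σ w) * a (σ w'')) * (a (π w'))
        + (a (σ w') * a (σ w'')) * (a (π w))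
        + (a (σ w)) * (a (π w') * a (π w''))
        + (a (σ w')) * (a (π w) * a (π w''))
        + (a (σ w'')) * (a (π w) * a (π w'))
        + (1:ℝ) * (a (π w) * a (π w') * a (π w'')) := by
    intro σ π; ring
  rw [Finset.sum_congr rfl fun σ _ => Finset.sum_congr rfl fun π _ => expand σ π]
  simp only [Finset.sum_add_distrib]
  rw [← Finset.sum_mul_sum Finset.univ Finset.univ
      (fun σ : Equiv.Perm (Fin N) => a (σ w) * a (σ w') * a (σ w'')) (fun _ => (1:ℝ)),
    ← Finset.sum_mul_sum Finset.univ Finset.univ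
      (fun σ : Equiv.Perm (Fin N) => a (σ w) * a (σ w'))
      (fun π : Equiv.Perm (Fin N) => a (π w'')),
    ← Finset.sum_mul_sum Finset.univ Finset.univ
      (fun σ : Equiv.Perm (Fin N) => a (σ w) * a (σ w''))
      (fun π : Equiv.Perm (Fin N) => a (π w')),
    ← Finset.sum_mul_sum Finset.univ Finset.univ
      (fun σ : Equiv.Perm (Fin N) => a (σ w') * a (σ w''))
      (fun π : Equiv.Perm (Fin N) => a (π w)),
    ← Finset.sum_mul_sum Finset.univ Finset.univ
      (fun σ : Equiv.Perm (Fin N) => a (σ w))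
      (fun π : Equiv.Perm (Fin N) => a (π w') * a (π w'')),
    ← Finset.sum_mul_sum Finset.univ Finset.univ
      (fun σ : Equiv.Perm (Fin N) => a (σ w'))
      (fun π : Equiv.Perm (Fin N) => a (π w) * a (π w'')),
    ← Finset.sum_mul_sum Finset.univ Finset.univ
      (fun σ : Equiv.Perm (Fin N) => a (σ w''))
      (fun π : Equiv.Perm (Fin N) => a (π w) * a (π w')),
    ← Finset.sum_mul_sum Finset.univ Finset.univ
      (fun _ : Equiv.Perm (Fin N) => (1:ℝ))
      (fun π : Equiv.Perm (Fin N) => a (π w) * a (π w') * a (π w''))]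
  rw [Haaa, Haao, Haoa, Hoaa, Haoo, Hoao, Hooa]
  rw [Hooo]
  rw [div_eq_div_iff (mul_ne_zero (mul_ne_zero hc0 (by rw [hV1]; exact mul_ne_zero (mul_ne_zero hn0 hn1) hn2)) (mul_ne_zero hc0 (by rw [hV1]; exact mul_ne_zero (mul_ne_zero hn0 hn1) hn2))) (mul_ne_zero (mul_ne_zero (mul_ne_zero hn0 hn1) hn2) (mul_ne_zero (mul_ne_zero hn0 hn1) hn2))]
  ring

end Aux

set_option maxHeartbeats 1000000 in
/-- Theorem 5 (ρ_{S3} for 1-D mapping): with independent uniform permutations `σ, π`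
and symbol energy `E_w = u(σ w)² + u(π w)²`, for pairwise distinct positions
`w, w', w''` (`N ≥ 3`), `E[E_w·E_{w'}·E_{w''}] = 2ρ₃ + 6·ρ₁·m₂` with
`ρ₁ = (N·m₂² − m₄)/(N−1)` and `ρ₃ = (N²·m₂³ − 3N·m₂·m₄ + 2·m₆)/((N−1)(N−2))`. -/
theorem rhoS3_oneD (N : ℕ) (hN : 3 ≤ N) (u : Fin N → ℝ)
    (w w' w'' : Fin N) (h1 : w ≠ w') (h2 : w ≠ w'') (h3 : w' ≠ w'') :
    permExpect2 N (fun p =>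
        ((u (p.1 w)) ^ 2 + (u (p.2 w)) ^ 2)
          * ((u (p.1 w')) ^ 2 + (u (p.2 w')) ^ 2)
          * ((u (p.1 w'')) ^ 2 + (u (p.2 w'')) ^ 2))
      = 2 * (((N : ℝ) ^ 2 * (empMoment N u 2) ^ 3
              - 3 * (N : ℝ) * empMoment N u 2 * empMoment N u 4
              + 2 * empMoment N u 6) / (((N : ℝ) - 1) * ((N : ℝ) - 2)))
        + 6 * (((N : ℝ) * (empMoment N u 2) ^ 2 - empMoment N u 4) / ((N : ℝ) - 1))
            * empMoment N u 2 := by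
  have key : permExpect2 N (fun p =>
        ((u (p.1 w)) ^ 2 + (u (p.2 w)) ^ 2)
          * ((u (p.1 w')) ^ 2 + (u (p.2 w')) ^ 2)
          * ((u (p.1 w'')) ^ 2 + (u (p.2 w'')) ^ 2))
      = (2 * ((∑ i, u i ^ 2) ^ 3 - 3 * (∑ i, u i ^ 2) * (∑ i, u i ^ 2 * u i ^ 2)
            + 2 * (∑ i, u i ^ 2 * u i ^ 2 * u i ^ 2)) * ((N:ℝ) * ((N:ℝ)-1) * ((N:ℝ)-2))
          + 6 * (((N:ℝ)-2) * ((∑ i, u i ^ 2) * (∑ i, u i ^ 2) - (∑ i, u i ^ 2 * u i ^ 2)))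
            * (((N:ℝ)-1) * ((N:ℝ)-2) * (∑ i, u i ^ 2)))
        / (((N:ℝ) * ((N:ℝ)-1) * ((N:ℝ)-2)) * ((N:ℝ) * ((N:ℝ)-1) * ((N:ℝ)-2))) :=
    main_aux hN (fun i => u i ^ 2) w w' w'' h1 h2 h3
  rw [key]
  have e4 : ∑ i, u i ^ 2 * u i ^ 2 = ∑ i, u i ^ 4 :=
    Finset.sum_congr rfl (fun i _ => by ring)
  have e6 : ∑ i, u i ^ 2 * u i ^ 2 * u i ^ 2 = ∑ i, u i ^ 6 :=
    Finset.sum_congr rfl (fun i _ => by ring)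
  rw [e4, e6]
  simp only [empMoment]
  have hn3 : (3:ℝ) ≤ (N:ℝ) := by exact_mod_cast hN
  have hn0 : (N:ℝ) ≠ 0 := by linarith
  have hn1 : (N:ℝ) - 1 ≠ 0 := by intro h; nlinarith
  have hn2 : (N:ℝ) - 2 ≠ 0 := by intro h; nlinarith
  field_simp
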